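/- Let Γ be a cyclic group of order p^r (p an odd prime, r ≥ 2), R = ℤ_p[Γ], and N_Γ the norm element. Suppose w ∈ ℚ_p[Γ]^× satisfies (N_Γ) ⊆ w·(N_Γ, p^r) ⊆ R. Then p^r w ∈ R and the augmentation aug(w) is a unit in ℤ_p. -/

import Mathlib

open MonoidAlgebra

/-- The inclusion ℤ_p[Γ] → ℚ_p[Γ] induced by ℤ_p ⊆ ℚ_p. -/
noncomputable def zpIncl (p : ℕ) [Fact p.Prime] (Γ : Type) [CommGroup Γ] :
    MonoidAlgebra ℤ_[p] Γ →+* MonoidAlgebra ℚ_[p] Γ :=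
  MonoidAlgebra.liftNCRingHom
    (MonoidAlgebra.singleOneRingHom.comp (PadicInt.Coe.ringHom))
    (MonoidAlgebra.of ℚ_[p] Γ) (fun _ _ => Commute.all _ _)

/-- The augmentation map ℚ_p[Γ] → ℚ_p sending every group element to 1. -/
noncomputable def qpAug (p : ℕ) [Fact p.Prime] (Γ : Type) [CommGroup Γ] :
    MonoidAlgebra ℚ_[p] Γ →+* ℚ_[p] :=
  MonoidAlgebra.liftNCRingHom (RingHom.id ℚ_[p]) 1 (fun _ _ => Commute.all _ _)

noncomputable def zpAug (p : ℕ) [Fact p.Prime] (Γ : Type) [CommGroup Γ] :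
    MonoidAlgebra ℤ_[p] Γ →+* ℤ_[p] :=
  MonoidAlgebra.liftNCRingHom (RingHom.id ℤ_[p]) 1 (fun _ _ => Commute.all _ _)

variable (p : ℕ) [Fact p.Prime] (Γ : Type) [CommGroup Γ]

theorem zpIncl_single (a : Γ) (b : ℤ_[p]) :
    zpIncl p Γ (single a b) = single a (b : ℚ_[p]) := by
  show liftNC _ _ (single a b) = _
  simp only [liftNC_single, RingHom.coe_comp, RingHom.toAddMonoidHom_eq_coe,
    AddMonoidHom.coe_coe, Function.comp_apply, singleOneRingHom_apply,
    MonoidAlgebra.of_apply, single_mul_single, one_mul, mul_one]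
  show single (1:Γ) ((b:ℚ_[p])) * single a 1 = _
  rw [single_mul_single, one_mul, mul_one]

theorem qpAug_single (a : Γ) (b : ℚ_[p]) : qpAug p Γ (single a b) = b := by
  simp [qpAug, liftNCRingHom]

theorem zpAug_single (a : Γ) (b : ℤ_[p]) : zpAug p Γ (single a b) = b := by
  simp [zpAug, liftNCRingHom]

theorem zpIncl_apply (x : MonoidAlgebra ℤ_[p] Γ) (g : Γ) :
    (zpIncl p Γ x).coeff g = (x.coeff g : ℚ_[p]) := by
  induction x using MonoidAlgebra.induction_linear with
  | zero => simp
  | add f h hf hh =>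
      rw [map_add]
      show (zpIncl p Γ f + zpIncl p Γ h).coeff g = ((f + h).coeff g : ℚ_[p])
      rw [coeff_add, coeff_add, Finsupp.add_apply, Finsupp.add_apply, hf, hh]; push_cast; ring
  | single a b =>
      rw [zpIncl_single]
      show Finsupp.single a (b:ℚ_[p]) g = ((Finsupp.single a b) g : ℚ_[p])
      classical
      rw [Finsupp.single_apply, Finsupp.single_apply]
      split <;> simp

theorem qpAug_zpIncl (x : MonoidAlgebra ℤ_[p] Γ) :
    qpAug p Γ (zpIncl p Γ x) = (zpAug p Γ x : ℚ_[p]) := by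
  induction x using MonoidAlgebra.induction_linear with
  | zero => simp
  | add f h hf hh => rw [map_add, map_add, map_add, hf, hh]; push_cast; ring
  | single a b => rw [zpIncl_single, qpAug_single, zpAug_single]

theorem qpAug_eq_sum [Fintype Γ] (f : MonoidAlgebra ℚ_[p] Γ) :
    qpAug p Γ f = ∑ g : Γ, f.coeff g := by
  induction f using MonoidAlgebra.induction_linear with
  | zero => simp
  | add f h hf hh =>
      rw [map_add, hf, hh, ← Finset.sum_add_distrib]
      exact Finset.sum_congr rfl (fun g _ => rfl)
  | single a b =>
      rw [qpAug_single]
      show b = ∑ g : Γ, Finsupp.single a b g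
      simp [Finsupp.single_apply]


/-- Γ cyclic of order p^r (p odd prime, r ≥ 2), R = ℤ_p[Γ], N_Γ the norm
element.  If w ∈ ℚ_p[Γ]ˣ satisfies (N_Γ) ⊆ w·(N_Γ, p^r) ⊆ R, then p^r·w ∈ R and
aug(w) is a unit of ℤ_p. -/
theorem stmt1 (p r : ℕ) [Fact p.Prime] (hp : Odd p) (hr : 2 ≤ r)
    (Γ : Type) [CommGroup Γ] [Fintype Γ] [IsCyclic Γ]
    (hcard : Fintype.card Γ = p ^ r)
    (N : MonoidAlgebra ℤ_[p] Γ) (hN : N = ∑ g : Γ, MonoidAlgebra.single g 1)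
    (w : (MonoidAlgebra ℚ_[p] Γ)ˣ)
    (hsub1 : ∀ x ∈ Ideal.span ({N} : Set (MonoidAlgebra ℤ_[p] Γ)),
      ∃ y ∈ Ideal.span ({N, (p : MonoidAlgebra ℤ_[p] Γ) ^ r} : Set (MonoidAlgebra ℤ_[p] Γ)),
        zpIncl p Γ x = (w : MonoidAlgebra ℚ_[p] Γ) * zpIncl p Γ y)
    (hsub2 : ∀ y ∈ Ideal.span ({N, (p : MonoidAlgebra ℤ_[p] Γ) ^ r} : Set (MonoidAlgebra ℤ_[p] Γ)),
      ∃ x : MonoidAlgebra ℤ_[p] Γ,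
        (w : MonoidAlgebra ℚ_[p] Γ) * zpIncl p Γ y = zpIncl p Γ x) :
    (∃ x : MonoidAlgebra ℤ_[p] Γ,
        (p : MonoidAlgebra ℚ_[p] Γ) ^ r * (w : MonoidAlgebra ℚ_[p] Γ) = zpIncl p Γ x) ∧
      ∃ z : ℤ_[p], IsUnit z ∧ (z : ℚ_[p]) = qpAug p Γ (w : MonoidAlgebra ℚ_[p] Γ) := by
  have hNmem : N ∈ Ideal.span ({N, (p : MonoidAlgebra ℤ_[p] Γ) ^ r} :
      Set (MonoidAlgebra ℤ_[p] Γ)) :=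
    Ideal.subset_span (Set.mem_insert _ _)
  have hpmem : (p : MonoidAlgebra ℤ_[p] Γ) ^ r ∈ Ideal.span
      ({N, (p : MonoidAlgebra ℤ_[p] Γ) ^ r} : Set (MonoidAlgebra ℤ_[p] Γ)) :=
    Ideal.subset_span (Set.mem_insert_of_mem _ rfl)
  constructor
  · obtain ⟨x, hx⟩ := hsub2 _ hpmem
    refine ⟨x, ?_⟩
    rw [← hx, map_pow, map_natCast, mul_comm]
  · -- q := qpAug w
    have hNQ : zpIncl p Γ N = ∑ g : Γ, single g (1 : ℚ_[p]) := by
      rw [hN, map_sum]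
      exact Finset.sum_congr rfl fun g _ => zpIncl_single p Γ g 1
    -- aug of N over ℤ_p
    have hzaugN : zpAug p Γ N = (p : ℤ_[p]) ^ r := by
      rw [hN, map_sum]
      simp only [zpAug_single]
      rw [Finset.sum_const, Finset.card_univ, hcard, nsmul_eq_mul, mul_one]
      push_cast; ring
    obtain ⟨x, hx⟩ := hsub2 _ hNmem
    -- coefficient of w * zpIncl N at 1
    have hcoef : ((w : MonoidAlgebra ℚ_[p] Γ) * zpIncl p Γ N).coeff 1
        = qpAug p Γ (w : MonoidAlgebra ℚ_[p] Γ) := by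
      rw [hNQ, Finset.mul_sum]
      rw [coeff_sum, Finsupp.finset_sum_apply]
      simp only [MonoidAlgebra.coeff_mul_single_apply, one_mul, mul_one]
      rw [qpAug_eq_sum]
      exact Equiv.sum_comp (Equiv.inv Γ) (fun g => (w : MonoidAlgebra ℚ_[p] Γ).coeff g)
    have hz : ((x.coeff 1 : ℤ_[p]) : ℚ_[p]) = qpAug p Γ (w : MonoidAlgebra ℚ_[p] Γ) := by
      rw [← hcoef, hx, zpIncl_apply]
    -- inverse
    obtain ⟨y, hy, hEq⟩ := hsub1 N (Ideal.subset_span rfl)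
    obtain ⟨u, v, huv⟩ := Ideal.mem_span_pair.mp hy
    have haugy : zpAug p Γ y = (zpAug p Γ u + zpAug p Γ v) * (p : ℤ_[p]) ^ r := by
      rw [← huv, map_add, map_mul, map_mul, hzaugN, map_pow, map_natCast]; ring
    have hpr : ((p : ℚ_[p]) ^ r) ≠ 0 := by
      have : (p : ℚ_[p]) ≠ 0 := Nat.cast_ne_zero.mpr (Fact.out : p.Prime).ne_zero
      exact pow_ne_zero _ this
    have hmain : qpAug p Γ (w : MonoidAlgebra ℚ_[p] Γ)
        * ((zpAug p Γ u + zpAug p Γ v : ℤ_[p]) : ℚ_[p]) = 1 := by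
      have h1 := congrArg (qpAug p Γ) hEq
      rw [map_mul, qpAug_zpIncl, qpAug_zpIncl, hzaugN, haugy] at h1
      push_cast at h1 ⊢
      apply mul_right_cancel₀ hpr
      rw [one_mul]
      linear_combination -h1
    have hu : x.coeff 1 * (zpAug p Γ u + zpAug p Γ v) = 1 := by
      have h2 : ((x.coeff 1 * (zpAug p Γ u + zpAug p Γ v) : ℤ_[p]) : ℚ_[p]) = ((1 : ℤ_[p]) : ℚ_[p]) := by
        push_cast
        rw [hz]
        push_cast at hmain
        linear_combination hmain
      exact Subtype.coe_injective (by push_cast at h2 ⊢; exact h2)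
    exact ⟨x.coeff 1, IsUnit.of_mul_eq_one _ hu, hz⟩
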